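/- Let A = (Q, Σ, δ) be a synchronizing automaton with Σ = {a_1, …, a_m}, m = 2^k for some k ≥ 1, and let B(A) = (Q × {0,1}^{≤ k}, {0,1}, δ') be the 2-letter automaton defined by δ'((q, w), x) = (q, wx) if |w| < k; δ'((q, w), 1) = (δ(q, a_{ℓ(w)}), λ) if |w| = k; and δ'((q, w), 0) = (q, w) if |w| = k. If w is a shortest binary word such that the image of the set Q × {λ} under the action of w in B(A) is a single state, then w decomposes as w = w_1 1 w_2 1 ⋯ w_r 1 where each block w_j ∈ {0,1}^k has length exactly k, and the word a_{ℓ(w_1)} a_{ℓ(w_2)} ⋯ a_{ℓ(w_r)} is a reset word for A. -/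

import Mathlib

def wordAct {Q A : Type*} (δ : Q → A → Q) (q : Q) (w : List A) : Q :=
  w.foldl δ q

def IsResetWord {Q A : Type*} (δ : Q → A → Q) (w : List A) : Prop :=
  ∀ p q : Q, wordAct δ p w = wordAct δ q w

def Synchronizing {Q A : Type*} (δ : Q → A → Q) : Prop :=
  ∃ w : List A, IsResetWord δ w

noncomputable def resetThreshold {Q A : Type*} (δ : Q → A → Q) : ℕ :=
  sInf {n : ℕ | ∃ w : List A, w.length = n ∧ IsResetWord δ w}

/-- The value of a binary string read most-significant-bit first.  For strings of a
fixed length `k`, lexicographic order (with `false < true`) agrees with the order of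
`bitVal`, so the lexicographic index `ℓ(w) ∈ {1, …, 2^k}` equals `bitVal w + 1`. -/
def bitVal : List Bool → ℕ
  | [] => 0
  | b :: t => (if b then 1 else 0) * 2 ^ t.length + bitVal t

/-- The length-`k` binary string whose `bitVal` is `n % 2^k`; i.e. `ℓ⁻¹(n+1)` for `n < 2^k`. -/
def bits : ℕ → ℕ → List Bool
  | 0, _ => []
  | k + 1, n => decide (2 ^ k ≤ n % 2 ^ (k + 1)) :: bits k n

/-- The transition function of the 2-letter automaton `B(A)` on `Q × {0,1}^{≤k}`:
if `|w| < k` the letter is appended; if `|w| = k`, letter `1` applies the letter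
`a_{ℓ(w)}` of `A` and resets the string to `λ`, while letter `0` does nothing. -/
def deltaB {Q : Type*} (k : ℕ) (δ : Q → Fin (2 ^ k) → Q) :
    Q × {w : List Bool // w.length ≤ k} → Bool →
      Q × {w : List Bool // w.length ≤ k} :=
  fun s x =>
    if h : s.2.val.length < k then
      (s.1, ⟨s.2.val ++ [x], by simpa using h⟩)
    else if x then
      (δ s.1 ⟨bitVal s.2.val % 2 ^ k, Nat.mod_lt _ (Nat.pow_pos (by norm_num))⟩,
        ⟨[], by simp⟩)
    else s

/-- A word `w` merges the subset `Q × {λ}` of `B(A)`: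
the image of `Q × {λ}` under the action of `w` is a single state. -/
def MergesQLambda {Q : Type*} (k : ℕ) (δ : Q → Fin (2 ^ k) → Q) (w : List Bool) : Prop :=
  ∃ s, ∀ q : Q,
    wordAct (deltaB k δ) (q, ⟨[], by simp⟩) w = s

namespace SyncAux

def fch (k : ℕ) (u : List Bool) : Fin (2 ^ k) :=
  ⟨bitVal u % 2 ^ k, Nat.mod_lt _ (Nat.pow_pos (by norm_num))⟩

lemma wordAct_append {Q A : Type*} (d : Q → A → Q) (q : Q) (a b : List A) :
    wordAct d q (a ++ b) = wordAct d (wordAct d q a) b :=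
  List.foldl_append ..

lemma wordAct_cons {Q A : Type*} (d : Q → A → Q) (q : Q) (x : A) (t : List A) :
    wordAct d q (x :: t) = wordAct d (d q x) t := rfl

variable {Q : Type*} {k : ℕ} (δ : Q → Fin (2 ^ k) → Q)

lemma append_phase : ∀ (v : List Bool) (q : Q) (b : {w : List Bool // w.length ≤ k})
    (h : b.val.length + v.length ≤ k),
    wordAct (deltaB k δ) (q, b) v = (q, ⟨b.val ++ v, by simpa using h⟩)
  | [], q, b, h => by simp [wordAct]
  | x :: t, q, b, h => by
    have hlt : b.val.length < k := by simp at h; omega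
    rw [wordAct_cons]
    have h1 : deltaB k δ (q, b) x = (q, ⟨b.val ++ [x], by simpa using hlt⟩) := by
      simp [deltaB, hlt]
    rw [h1, append_phase t q _ (by simp at h ⊢; omega)]
    simp

lemma append_phase_nil (v : List Bool) (hv : v.length ≤ k) (q : Q) :
    wordAct (deltaB k δ) (q, ⟨[], by simp⟩) v = (q, ⟨v, hv⟩) := by
  simpa using append_phase δ v q ⟨[], by simp⟩ (by simpa using hv)

lemma block_act (u : List Bool) (hu : u.length = k) (q : Q) :
    wordAct (deltaB k δ) (q, ⟨[], by simp⟩) (u ++ [true]) =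
      (δ q (fch k u), ⟨[], by simp⟩) := by
  rw [wordAct_append, append_phase_nil δ u hu.le q]
  have hnlt : ¬ u.length < k := by omega
  simp [wordAct, deltaB, hnlt, fch]

lemma flatten_act : ∀ (ws : List (List Bool)), (∀ u ∈ ws, u.length = k) → ∀ q : Q,
    wordAct (deltaB k δ) (q, ⟨[], by simp⟩) ((ws.map (· ++ [true])).flatten) =
      (wordAct δ q (ws.map (fch k)), ⟨[], by simp⟩)
  | [], _, q => by simp [wordAct]
  | u :: ws, h, q => by
    rw [List.map_cons, List.flatten_cons, wordAct_append,
      block_act δ u (h u (by simp)), List.map_cons, wordAct_cons]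
    exact flatten_act ws (fun v hv => h v (by simp [hv])) _

lemma decomp : ∀ n (w : List Bool) (P : Q → Prop), w.length = n →
    (∃ s, ∀ q, P q → wordAct (deltaB k δ) (q, ⟨[], by simp⟩) w = s) →
    (∀ w' : List Bool,
      (∃ s, ∀ q, P q → wordAct (deltaB k δ) (q, ⟨[], by simp⟩) w' = s) →
      w.length ≤ w'.length) →
    ∃ ws : List (List Bool), (∀ u ∈ ws, u.length = k) ∧
      w = (ws.map (· ++ [true])).flatten := by
  intro n
  induction n using Nat.strong_induction_on with
  | _ n ih =>
  intro w P hlen hM hshort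
  rcases eq_or_ne w [] with rfl | hw
  · exact ⟨[], by simp, by simp⟩
  obtain ⟨s, hs⟩ := hM
  have hklt : k < w.length := by
    by_contra hle
    push_neg at hle
    have hM0 : ∃ s₀, ∀ q, P q →
        wordAct (deltaB k δ) (q, ⟨[], by simp⟩) [] = s₀ := by
      refine ⟨(s.1, ⟨[], by simp⟩), fun q hq => ?_⟩
      have h1 := hs q hq
      rw [append_phase_nil δ w hle q] at h1
      have : q = s.1 := congrArg Prod.fst h1
      simp [wordAct, this]
    have := hshort [] hM0
    simp at this
    exact hw this
  set u := w.take k with hu_def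
  have hu : u.length = k := by simp [hu_def]; omega
  have hdropne : w.drop k ≠ [] := by
    intro h
    have := congrArg List.length h
    simp at this
    omega
  obtain ⟨x, rest, hd⟩ := List.exists_cons_of_ne_nil hdropne
  have hw_eq : w = u ++ x :: rest := by
    rw [← hd, hu_def, List.take_append_drop]
  have hlens : w.length = k + 1 + rest.length := by
    rw [hw_eq]; simp [hu]; omega
  cases x with
  | false =>
    exfalso
    have key : ∀ q : Q, wordAct (deltaB k δ) (q, ⟨[], by simp⟩) w =
        wordAct (deltaB k δ) (q, ⟨[], by simp⟩) (u ++ rest) := by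
      intro q
      rw [hw_eq, wordAct_append, wordAct_append, append_phase_nil δ u hu.le q,
        wordAct_cons]
      have hnlt : ¬ u.length < k := by omega
      simp [deltaB, hnlt]
    have hM' : ∃ s', ∀ q, P q →
        wordAct (deltaB k δ) (q, ⟨[], by simp⟩) (u ++ rest) = s' :=
      ⟨s, fun q hq => (key q).symm.trans (hs q hq)⟩
    have hle := hshort _ hM'
    have hlen2 : (u ++ rest).length = k + rest.length := by simp [hu]
    omega
  | true =>
    have hw_eq' : w = (u ++ [true]) ++ rest := by rw [hw_eq]; simp
    have hblock : ∀ q : Q, wordAct (deltaB k δ) (q, ⟨[], by simp⟩) w =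
        wordAct (deltaB k δ) (δ q (fch k u), ⟨[], by simp⟩) rest := by
      intro q
      rw [hw_eq', wordAct_append, block_act δ u hu q]
    have hM' : ∃ s', ∀ q', (∃ q, P q ∧ δ q (fch k u) = q') →
        wordAct (deltaB k δ) (q', ⟨[], by simp⟩) rest = s' := by
      refine ⟨s, ?_⟩
      rintro q' ⟨q, hq, rfl⟩
      rw [← hblock q]
      exact hs q hq
    have hshort' : ∀ w'' : List Bool,
        (∃ s'', ∀ q', (∃ q, P q ∧ δ q (fch k u) = q') →
          wordAct (deltaB k δ) (q', ⟨[], by simp⟩) w'' = s'') →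
        rest.length ≤ w''.length := by
      rintro w'' ⟨s'', hs''⟩
      have hMfull : ∃ t, ∀ q, P q →
          wordAct (deltaB k δ) (q, ⟨[], by simp⟩) ((u ++ [true]) ++ w'') = t := by
        refine ⟨s'', fun q hq => ?_⟩
        rw [wordAct_append, block_act δ u hu q]
        exact hs'' _ ⟨q, hq, rfl⟩
      have hle := hshort _ hMfull
      have hlen2 : ((u ++ [true]) ++ w'').length = k + 1 + w''.length := by
        simp [hu]; try omega
      omega
    obtain ⟨ws', h1, h2⟩ := ih rest.length (by omega) rest _ rfl hM' hshort'
    refine ⟨u :: ws', ?_, ?_⟩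
    · intro v hv
      rcases List.mem_cons.mp hv with rfl | hv
      · exact hu
      · exact h1 v hv
    · rw [hw_eq', h2]; simp

end SyncAux

/-- If `w` is a shortest binary word merging `Q × {λ}` in `B(A)`, then `w` decomposes
as `w = w₁ 1 w₂ 1 ⋯ w_r 1` with each `wⱼ` of length exactly `k`, and the word
`a_{ℓ(w₁)} ⋯ a_{ℓ(w_r)}` is a reset word for `A`. -/



theorem shortest_merging_word_decomposes {Q : Type} [Fintype Q] [Nonempty Q]
    (k : ℕ) (hk : 1 ≤ k) (δ : Q → Fin (2 ^ k) → Q) (hsync : Synchronizing δ)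
    (w : List Bool) (hmerge : MergesQLambda k δ w)
    (hshort : ∀ w' : List Bool, MergesQLambda k δ w' → w.length ≤ w'.length) :
    ∃ ws : List (List Bool),
      (∀ u ∈ ws, u.length = k) ∧
      w = (ws.map (· ++ [true])).flatten ∧
      IsResetWord δ (ws.map fun u =>
        (⟨bitVal u % 2 ^ k,
          Nat.mod_lt _ (Nat.pow_pos (by norm_num))⟩ : Fin (2 ^ k))) := by
  obtain ⟨s, hs⟩ := hmerge
  obtain ⟨ws, h1, h2⟩ := SyncAux.decomp δ w.length w (fun _ => True) rfl
    ⟨s, fun q _ => hs q⟩ (fun w' ⟨s', hs'⟩ => hshort w' ⟨s', fun q => hs' q trivial⟩)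
  refine ⟨ws, h1, h2, fun p q => ?_⟩
  have hp := (SyncAux.flatten_act δ ws h1 p).symm.trans (h2 ▸ hs p)
  have hq := (SyncAux.flatten_act δ ws h1 q).symm.trans (h2 ▸ hs q)
  have := hp.trans hq.symm
  exact congrArg Prod.fst this
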